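/- If A, B are positive semidefinite n×n matrices with A ≥ B, then the operator norm of A^{-1/2} B A^{-1/2} is at most 1, and consequently for p ∈ (0,1), A^p ≥ B^p follows from log-convexity of t ↦ ‖A^{-t/2} B^t A^{-t/2}‖: specifically, if f(t) = ‖A^{-t/2} B^t A^{-t/2}‖ is log-convex with f(0) = 1 and f(1) ≤ 1, then f(p) ≤ 1 for all p ∈ (0,1). -/

import Mathlib

open Matrix ComplexOrder

/-- The absolute value `|M| = (Mᴴ M)^{1/2}` of a complex matrix. -/
noncomputable def matAbs {n : ℕ} (M : Matrix (Fin n) (Fin n) ℂ) : Matrix (Fin n) (Fin n) ℂ :=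
  ((Matrix.posSemidef_conjTranspose_mul_self M).1.eigenvectorUnitary : Matrix (Fin n) (Fin n) ℂ) *
    Matrix.diagonal ((↑) ∘ (√·) ∘ (Matrix.posSemidef_conjTranspose_mul_self M).1.eigenvalues) *
    (star (Matrix.posSemidef_conjTranspose_mul_self M).1.eigenvectorUnitary : Matrix (Fin n) (Fin n) ℂ)

theorem matAbs_posSemidef {n : ℕ} (M : Matrix (Fin n) (Fin n) ℂ) : (matAbs M).PosSemidef := by
  unfold matAbs
  rw [Matrix.star_eq_conjTranspose]
  exact (Matrix.PosSemidef.diagonal (fun i => by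
    simp only [Pi.zero_apply, Function.comp_apply]
    exact_mod_cast Real.sqrt_nonneg _)).mul_mul_conjTranspose_same _

/-- Eigenvalues of a Hermitian matrix arranged in decreasing order:
`eigDesc hM j` is the `j`-th largest eigenvalue. -/
noncomputable def eigDesc {n : ℕ} {M : Matrix (Fin n) (Fin n) ℂ} (hM : M.IsHermitian) :
    Fin n → ℝ :=
  fun i => hM.eigenvalues (Tuple.sort hM.eigenvalues i.rev)

/-- Eigenvalues of a Hermitian matrix arranged in increasing order. -/
noncomputable def eigAsc {n : ℕ} {M : Matrix (Fin n) (Fin n) ℂ} (hM : M.IsHermitian) :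
    Fin n → ℝ :=
  fun i => hM.eigenvalues (Tuple.sort hM.eigenvalues i)

/-- The largest eigenvalue of a Hermitian matrix. -/
noncomputable def maxEig {n : ℕ} {M : Matrix (Fin n) (Fin n) ℂ} (hM : M.IsHermitian) : ℝ :=
  ⨆ i, hM.eigenvalues i

/-- Real power `M^t` of a Hermitian matrix, via the spectral decomposition. -/
noncomputable def rpowH {n : ℕ} {M : Matrix (Fin n) (Fin n) ℂ} (hM : M.IsHermitian) (t : ℝ) :
    Matrix (Fin n) (Fin n) ℂ :=
  (hM.eigenvectorUnitary : Matrix (Fin n) (Fin n) ℂ) *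
    Matrix.diagonal (fun i => ((hM.eigenvalues i ^ t : ℝ) : ℂ)) *
    star (hM.eigenvectorUnitary : Matrix (Fin n) (Fin n) ℂ)

theorem rpowH_isHermitian {n : ℕ} {M : Matrix (Fin n) (Fin n) ℂ} (hM : M.IsHermitian) (t : ℝ) :
    (rpowH hM t).IsHermitian := by
  unfold rpowH
  unfold Matrix.IsHermitian
  simp [Matrix.conjTranspose_mul, Matrix.diagonal_conjTranspose, mul_assoc,
    Matrix.star_eq_conjTranspose]
  congr 2
  funext i
  simp [star]
  rfl

/-- The ℓ²→ℓ² operator norm of a complex matrix. -/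
noncomputable def opN {n : ℕ} (M : Matrix (Fin n) (Fin n) ℂ) : ℝ :=
  ‖Matrix.toEuclideanCLM (𝕜 := ℂ) M‖


variable {n : ℕ}

namespace LH

/-- Apply a real function to a Hermitian matrix via its spectral decomposition. -/
noncomputable def funH {M : Matrix (Fin n) (Fin n) ℂ} (hM : M.IsHermitian) (g : ℝ → ℝ) :
    Matrix (Fin n) (Fin n) ℂ :=
  (hM.eigenvectorUnitary : Matrix (Fin n) (Fin n) ℂ) *
    Matrix.diagonal (fun i => ((g (hM.eigenvalues i) : ℝ) : ℂ)) *
    star (hM.eigenvectorUnitary : Matrix (Fin n) (Fin n) ℂ)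

theorem rpowH_eq_funH {M : Matrix (Fin n) (Fin n) ℂ} (hM : M.IsHermitian) (t : ℝ) :
    rpowH hM t = funH hM (fun x => x ^ t) := rfl

theorem funH_isHermitian {M : Matrix (Fin n) (Fin n) ℂ} (hM : M.IsHermitian) (g : ℝ → ℝ) :
    (funH hM g).IsHermitian := by
  unfold funH Matrix.IsHermitian
  simp [Matrix.conjTranspose_mul, Matrix.diagonal_conjTranspose, mul_assoc,
    Matrix.star_eq_conjTranspose]
  congr 2
  funext i
  simp [star]
  rfl

theorem funH_congr {M : Matrix (Fin n) (Fin n) ℂ} (hM : M.IsHermitian) {g g' : ℝ → ℝ}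
    (h : ∀ i, g (hM.eigenvalues i) = g' (hM.eigenvalues i)) : funH hM g = funH hM g' := by
  have hd : (fun i => ((g (hM.eigenvalues i) : ℝ) : ℂ)) =
      (fun i => ((g' (hM.eigenvalues i) : ℝ) : ℂ)) := funext fun i => by rw [h i]
  unfold funH
  rw [hd]

theorem funH_mul {M : Matrix (Fin n) (Fin n) ℂ} (hM : M.IsHermitian) (g g' : ℝ → ℝ) :
    funH hM g * funH hM g' = funH hM (fun x => g x * g' x) := by
  unfold funH
  have h1 : (star (hM.eigenvectorUnitary : Matrix (Fin n) (Fin n) ℂ)) *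
      (hM.eigenvectorUnitary : Matrix (Fin n) (Fin n) ℂ) = 1 :=
    Unitary.coe_star_mul_self hM.eigenvectorUnitary
  have h2 : ∀ X : Matrix (Fin n) (Fin n) ℂ,
      (star (hM.eigenvectorUnitary : Matrix (Fin n) (Fin n) ℂ)) *
        ((hM.eigenvectorUnitary : Matrix (Fin n) (Fin n) ℂ) * X) = X := fun X => by
    rw [← Matrix.mul_assoc, h1, Matrix.one_mul]
  have hd : (Matrix.diagonal fun i => ((g (hM.eigenvalues i) : ℝ) : ℂ)) *
      (Matrix.diagonal fun i => ((g' (hM.eigenvalues i) : ℝ) : ℂ)) =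
      Matrix.diagonal fun i => ((g (hM.eigenvalues i) * g' (hM.eigenvalues i) : ℝ) : ℂ) := by
    rw [Matrix.diagonal_mul_diagonal]
    exact congrArg _ (funext fun i => by push_cast; ring)
  simp only [Matrix.mul_assoc]
  rw [h2, ← Matrix.mul_assoc (Matrix.diagonal _), hd]

theorem funH_one {M : Matrix (Fin n) (Fin n) ℂ} (hM : M.IsHermitian) :
    funH hM (fun _ => 1) = 1 := by
  unfold funH
  have h1 : (hM.eigenvectorUnitary : Matrix (Fin n) (Fin n) ℂ) *
      (star (hM.eigenvectorUnitary : Matrix (Fin n) (Fin n) ℂ)) = 1 :=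
    Unitary.coe_mul_star_self hM.eigenvectorUnitary
  simpa using h1

theorem funH_id {M : Matrix (Fin n) (Fin n) ℂ} (hM : M.IsHermitian) :
    funH hM (fun x => x) = M := by
  unfold funH
  exact (hM.spectral_theorem).symm

theorem funH_sub {M : Matrix (Fin n) (Fin n) ℂ} (hM : M.IsHermitian) (g g' : ℝ → ℝ) :
    funH hM g - funH hM g' = funH hM (fun x => g x - g' x) := by
  unfold funH
  rw [← Matrix.sub_mul, ← Matrix.mul_sub, Matrix.diagonal_sub]
  congr
  funext i
  push_cast
  ring

theorem funH_add {M : Matrix (Fin n) (Fin n) ℂ} (hM : M.IsHermitian) (g g' : ℝ → ℝ) :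
    funH hM g + funH hM g' = funH hM (fun x => g x + g' x) := by
  unfold funH
  rw [← Matrix.add_mul, ← Matrix.mul_add, Matrix.diagonal_add]
  congr
  funext i
  push_cast
  ring

theorem funH_smul {M : Matrix (Fin n) (Fin n) ℂ} (hM : M.IsHermitian) (g : ℝ → ℝ) (c : ℝ) :
    (c : ℂ) • funH hM g = funH hM (fun x => c * g x) := by
  unfold funH
  have hd : (c : ℂ) • (Matrix.diagonal fun i => ((g (hM.eigenvalues i) : ℝ) : ℂ)) =
      Matrix.diagonal fun i => ((c * g (hM.eigenvalues i) : ℝ) : ℂ) := by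
    ext i j
    rcases eq_or_ne i j with rfl | hij
    · simp [Matrix.diagonal_apply_eq]
    · simp [Matrix.diagonal_apply_ne _ hij]
  rw [← Matrix.smul_mul, ← Matrix.mul_smul, hd]

end LH

namespace LH

theorem dot_self_eq (z : Fin n → ℂ) :
    dotProduct (star z) z = ((∑ i, ‖z i‖ ^ 2 : ℝ) : ℂ) := by
  unfold dotProduct
  push_cast
  refine Finset.sum_congr rfl fun i _ => ?_
  simpa using RCLike.conj_mul (z i)

theorem quadForm {M : Matrix (Fin n) (Fin n) ℂ} (hM : M.IsHermitian) (g : ℝ → ℝ)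
    (x : Fin n → ℂ) :
    dotProduct (star x) (funH hM g *ᵥ x) =
      ((∑ i, g (hM.eigenvalues i) *
        ‖((star (hM.eigenvectorUnitary : Matrix (Fin n) (Fin n) ℂ)) *ᵥ x) i‖ ^ 2 : ℝ) : ℂ) := by
  set U : Matrix (Fin n) (Fin n) ℂ := (hM.eigenvectorUnitary : Matrix (Fin n) (Fin n) ℂ) with hU
  set y : Fin n → ℂ := (star U) *ᵥ x with hy
  have h1 : funH hM g *ᵥ x =
      U *ᵥ ((Matrix.diagonal (fun i => ((g (hM.eigenvalues i) : ℝ) : ℂ))) *ᵥ y) := by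
    unfold funH
    rw [Matrix.mulVec_mulVec, Matrix.mulVec_mulVec]
  have h2 : star x ᵥ* U = star y := by
    rw [hy, Matrix.star_mulVec, Matrix.star_eq_conjTranspose, Matrix.conjTranspose_conjTranspose]
  rw [h1, Matrix.dotProduct_mulVec, h2]
  unfold dotProduct
  push_cast
  refine Finset.sum_congr rfl fun i _ => ?_
  rw [Matrix.mulVec_diagonal, Pi.star_apply, mul_left_comm]
  simp [RCLike.star_def, RCLike.conj_mul]

theorem funH_posSemidef {M : Matrix (Fin n) (Fin n) ℂ} (hM : M.IsHermitian) {g : ℝ → ℝ}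
    (h : ∀ i, 0 ≤ g (hM.eigenvalues i)) : (funH hM g).PosSemidef := by
  refine Matrix.PosSemidef.of_dotProduct_mulVec_nonneg (funH_isHermitian hM g) fun x => ?_
  rw [quadForm]
  rw [Complex.zero_le_real]
  exact Finset.sum_nonneg fun i _ => mul_nonneg (h i) (sq_nonneg _)

theorem unitary_mulVec_sumSq {U : Matrix (Fin n) (Fin n) ℂ}
    (hU : (star U) * U = 1) (z : Fin n → ℂ) :
    ∑ i, ‖(U *ᵥ z) i‖ ^ 2 = ∑ i, ‖z i‖ ^ 2 := by
  have h1 : dotProduct (star (U *ᵥ z)) (U *ᵥ z) = dotProduct (star z) z := by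
    rw [Matrix.star_mulVec, Matrix.dotProduct_mulVec, Matrix.vecMul_vecMul,
      ← Matrix.star_eq_conjTranspose, hU, Matrix.vecMul_one]
  rw [dot_self_eq, dot_self_eq] at h1
  exact_mod_cast h1

end LH

namespace LH

theorem single_sumSq (c : Fin n → ℝ) (i : Fin n) :
    ∑ k, c k * ‖(Pi.single i (1:ℂ) : Fin n → ℂ) k‖ ^ 2 = c i := by
  rw [Finset.sum_eq_single i]
  · simp
  · intro k _ hk
    simp [Pi.single_eq_of_ne hk]
  · simp

theorem eig_le_one {N : Matrix (Fin n) (Fin n) ℂ} (hN : N.IsHermitian)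
    (h1 : ((1 : Matrix (Fin n) (Fin n) ℂ) - N).PosSemidef) (i : Fin n) :
    hN.eigenvalues i ≤ 1 := by
  have hfun : (1 : Matrix (Fin n) (Fin n) ℂ) - N = funH hN (fun x => 1 - x) := by
    have h := funH_sub hN (fun _ => 1) (fun x => x)
    rw [funH_one, funH_id] at h
    exact h
  set U : Matrix (Fin n) (Fin n) ℂ := (hN.eigenvectorUnitary : Matrix (Fin n) (Fin n) ℂ) with hU
  set x : Fin n → ℂ := U *ᵥ Pi.single i 1 with hx
  have h2 := h1.dotProduct_mulVec_nonneg x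
  rw [hfun, quadForm] at h2
  have h3 : star U *ᵥ x = Pi.single i 1 := by
    rw [hx, Matrix.mulVec_mulVec, Unitary.coe_star_mul_self, Matrix.one_mulVec]
  rw [h3, single_sumSq _ i, Complex.zero_le_real] at h2
  linarith

theorem eig_ge_one {N : Matrix (Fin n) (Fin n) ℂ} (hN : N.IsHermitian)
    (h1 : (N - (1 : Matrix (Fin n) (Fin n) ℂ)).PosSemidef) (i : Fin n) :
    1 ≤ hN.eigenvalues i := by
  have hfun : N - (1 : Matrix (Fin n) (Fin n) ℂ) = funH hN (fun x => x - 1) := by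
    have h := funH_sub hN (fun x => x) (fun _ => 1)
    rw [funH_one, funH_id] at h
    exact h
  set U : Matrix (Fin n) (Fin n) ℂ := (hN.eigenvectorUnitary : Matrix (Fin n) (Fin n) ℂ) with hU
  set x : Fin n → ℂ := U *ᵥ Pi.single i 1 with hx
  have h2 := h1.dotProduct_mulVec_nonneg x
  rw [hfun, quadForm] at h2
  have h3 : star U *ᵥ x = Pi.single i 1 := by
    rw [hx, Matrix.mulVec_mulVec, Unitary.coe_star_mul_self, Matrix.one_mulVec]
  rw [h3, single_sumSq _ i, Complex.zero_le_real] at h2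
  linarith

theorem posDef_conj {X Z Z' : Matrix (Fin n) (Fin n) ℂ} (hX : X.PosDef) (hZ : Z.IsHermitian)
    (hZZ' : Z' * Z = 1) : (Z * X * Z).PosDef := by
  refine Matrix.PosDef.of_dotProduct_mulVec_pos ?_ ?_
  · unfold Matrix.IsHermitian
    rw [Matrix.conjTranspose_mul, Matrix.conjTranspose_mul, hZ.eq, hX.1.eq, Matrix.mul_assoc]
  · intro x hx
    have hw : Z *ᵥ x ≠ 0 := by
      intro h
      apply hx
      have : Z' *ᵥ (Z *ᵥ x) = x := by
        rw [Matrix.mulVec_mulVec, hZZ', Matrix.one_mulVec]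
      rw [h, Matrix.mulVec_zero] at this
      exact this.symm
    have key : dotProduct (star x) ((Z * X * Z) *ᵥ x) =
        dotProduct (star (Z *ᵥ x)) (X *ᵥ (Z *ᵥ x)) := by
      rw [← Matrix.mulVec_mulVec, ← Matrix.mulVec_mulVec, Matrix.dotProduct_mulVec,
        Matrix.star_mulVec, hZ.eq]
    rw [key]
    exact hX.dotProduct_mulVec_pos hw

theorem funH_posDef {M : Matrix (Fin n) (Fin n) ℂ} (hM : M.IsHermitian) {g : ℝ → ℝ}
    (h : ∀ i, 0 < g (hM.eigenvalues i)) : (funH hM g).PosDef := by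
  refine Matrix.PosDef.of_dotProduct_mulVec_pos (funH_isHermitian hM g) fun x hx => ?_
  rw [quadForm]
  rw [Complex.zero_lt_real]
  set U : Matrix (Fin n) (Fin n) ℂ := (hM.eigenvectorUnitary : Matrix (Fin n) (Fin n) ℂ)
  have hy : star U *ᵥ x ≠ 0 := by
    intro hy0
    apply hx
    have h1 : U * star U = 1 := Unitary.coe_mul_star_self hM.eigenvectorUnitary
    have : U *ᵥ (star U *ᵥ x) = x := by
      rw [Matrix.mulVec_mulVec, h1, Matrix.one_mulVec]
    rw [hy0, Matrix.mulVec_zero] at this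
    exact this.symm
  obtain ⟨j, hj⟩ := Function.ne_iff.mp hy
  refine Finset.sum_pos' (fun i _ => mul_nonneg (h i).le (sq_nonneg _)) ⟨j, Finset.mem_univ j, ?_⟩
  exact mul_pos (h j) (pow_pos (norm_pos_iff.mpr hj) 2)

theorem inv_unique {X P Q : Matrix (Fin n) (Fin n) ℂ} (hXP : X * P = 1) (hQX : Q * X = 1) :
    P = Q := by
  calc P = 1 * P := (Matrix.one_mul P).symm
    _ = Q * X * P := by rw [hQX]
    _ = Q * (X * P) := Matrix.mul_assoc _ _ _
    _ = Q := by rw [hXP, Matrix.mul_one]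

theorem funH_inv_right {X : Matrix (Fin n) (Fin n) ℂ} (hX : X.PosDef) :
    X * funH hX.1 (fun x => x⁻¹) = 1 := by
  have h := funH_mul hX.1 (fun x => x) (fun x => x⁻¹)
  rw [funH_id, funH_congr hX.1 (g := fun x => x * x⁻¹) (g' := fun _ => 1)
    (fun i => mul_inv_cancel₀ (hX.eigenvalues_pos i).ne'), funH_one] at h
  exact h

theorem funH_inv_left {X : Matrix (Fin n) (Fin n) ℂ} (hX : X.PosDef) :
    funH hX.1 (fun x => x⁻¹) * X = 1 := by
  have h := funH_mul hX.1 (fun x => x⁻¹) (fun x => x)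
  rw [funH_id, funH_congr hX.1 (g := fun x => x⁻¹ * x) (g' := fun _ => 1)
    (fun i => inv_mul_cancel₀ (hX.eigenvalues_pos i).ne'), funH_one] at h
  exact h

end LH

namespace LH

theorem inv_antitone {X Y : Matrix (Fin n) (Fin n) ℂ} (hX : X.PosDef) (hY : Y.PosDef)
    (hXY : (X - Y).PosSemidef) :
    (funH hY.1 (fun x => x⁻¹) - funH hX.1 (fun x => x⁻¹)).PosSemidef := by
  set Z := funH hY.1 (fun x => (Real.sqrt x)⁻¹) with hZdef
  set S := funH hY.1 Real.sqrt with hSdef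
  have hsqrt_pos : ∀ i, 0 < Real.sqrt (hY.1.eigenvalues i) :=
    fun i => Real.sqrt_pos.mpr (hY.eigenvalues_pos i)
  have hZS : Z * S = 1 := by
    rw [hZdef, hSdef, funH_mul, funH_congr hY.1
      (g := fun x => (Real.sqrt x)⁻¹ * Real.sqrt x) (g' := fun _ => 1)
      (fun i => inv_mul_cancel₀ (hsqrt_pos i).ne'), funH_one]
  have hSZ : S * Z = 1 := by
    rw [hZdef, hSdef, funH_mul, funH_congr hY.1
      (g := fun x => Real.sqrt x * (Real.sqrt x)⁻¹) (g' := fun _ => 1)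
      (fun i => mul_inv_cancel₀ (hsqrt_pos i).ne'), funH_one]
  have hZherm : Z.IsHermitian := funH_isHermitian _ _
  have hSS : S * S = Y := by
    rw [hSdef, funH_mul, funH_congr hY.1 (g := fun x => Real.sqrt x * Real.sqrt x)
      (g' := fun x => x) (fun i => Real.mul_self_sqrt (hY.eigenvalues_pos i).le), funH_id]
  have hcanc1 : ∀ R : Matrix (Fin n) (Fin n) ℂ, Z * (S * R) = R := fun R => by
    rw [← Matrix.mul_assoc, hZS, Matrix.one_mul]
  have hcanc2 : ∀ R : Matrix (Fin n) (Fin n) ℂ, S * (Z * R) = R := fun R => by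
    rw [← Matrix.mul_assoc, hSZ, Matrix.one_mul]
  have hZYZ : Z * Y * Z = 1 := by
    rw [← hSS]
    calc Z * (S * S) * Z = Z * (S * (S * Z)) := by simp only [Matrix.mul_assoc]
      _ = 1 := by rw [hSZ, Matrix.mul_one, hZS]
  set N := Z * X * Z with hNdef
  have hNpd : N.PosDef := posDef_conj hX hZherm hSZ
  have hSNS : S * N * S = X := by
    rw [hNdef]
    calc S * (Z * X * Z) * S = S * (Z * (X * (Z * S))) := by simp only [Matrix.mul_assoc]
      _ = X := by rw [hZS, Matrix.mul_one, hcanc2]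
  have hN1 : (N - 1).PosSemidef := by
    have hid : N - 1 = Z * (X - Y) * Zᴴ := by
      rw [hZherm.eq, Matrix.mul_sub, Matrix.sub_mul, hZYZ, hNdef]
    rw [hid]
    exact hXY.mul_mul_conjTranspose_same Z
  have heig : ∀ i, 1 ≤ hNpd.1.eigenvalues i := eig_ge_one hNpd.1 hN1
  set invN := funH hNpd.1 (fun x => x⁻¹) with hinvN
  have hNcanc : ∀ R : Matrix (Fin n) (Fin n) ℂ, N * (invN * R) = R := fun R => by
    rw [← Matrix.mul_assoc, funH_inv_right hNpd, Matrix.one_mul]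
  have hXinv : funH hX.1 (fun x => x⁻¹) = Z * invN * Z := by
    refine (inv_unique ?_ (funH_inv_left hX)).symm
    calc X * (Z * invN * Z) = (S * N * S) * (Z * invN * Z) := by rw [hSNS]
      _ = S * (N * (S * (Z * (invN * Z)))) := by simp only [Matrix.mul_assoc]
      _ = S * (N * (invN * Z)) := by rw [hcanc2]
      _ = S * Z := by rw [hNcanc]
      _ = 1 := hSZ
  have hYinv : funH hY.1 (fun x => x⁻¹) = Z * Z := by
    rw [hZdef, funH_mul, funH_congr hY.1
      (g := fun x => (Real.sqrt x)⁻¹ * (Real.sqrt x)⁻¹) (g' := fun x => x⁻¹)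
      (fun i => by
        show (Real.sqrt (hY.1.eigenvalues i))⁻¹ * (Real.sqrt (hY.1.eigenvalues i))⁻¹ =
          (hY.1.eigenvalues i)⁻¹
        rw [← mul_inv, Real.mul_self_sqrt (hY.eigenvalues_pos i).le])]
  have hdiff : funH hY.1 (fun x => x⁻¹) - funH hX.1 (fun x => x⁻¹) =
      Z * ((1 : Matrix (Fin n) (Fin n) ℂ) - invN) * Zᴴ := by
    rw [hZherm.eq, hXinv, hYinv, Matrix.mul_sub, Matrix.sub_mul, Matrix.mul_one]
  rw [hdiff]
  refine Matrix.PosSemidef.mul_mul_conjTranspose_same ?_ Z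
  have hfun : (1 : Matrix (Fin n) (Fin n) ℂ) - invN = funH hNpd.1 (fun x => 1 - x⁻¹) := by
    have h := funH_sub hNpd.1 (fun _ => 1) (fun x => x⁻¹)
    rw [funH_one] at h
    exact h
  rw [hfun]
  exact funH_posSemidef _ fun i =>
    sub_nonneg.mpr (inv_le_one_of_one_le₀ (heig i))

end LH

namespace LH

theorem funH_const {M : Matrix (Fin n) (Fin n) ℂ} (hM : M.IsHermitian) (c : ℝ) :
    funH hM (fun _ => c) = (c : ℂ) • 1 := by
  have h := funH_smul hM (fun _ => 1) c
  rw [funH_one, funH_congr hM (g := fun x => c * 1) (g' := fun _ => c)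
    (fun i => mul_one c)] at h
  exact h.symm

theorem resolvent_psd {A B : Matrix (Fin n) (Fin n) ℂ}
    (hA : A.PosDef) (hB : B.PosSemidef) (hBA : (A - B).PosSemidef) {t : ℝ} (ht : 0 < t) :
    (funH hB.1 (fun x => (x + t)⁻¹) - funH hA.1 (fun x => (x + t)⁻¹)).PosSemidef := by
  set Xt := funH hA.1 (fun x => x + t) with hXtdef
  set Yt := funH hB.1 (fun x => x + t) with hYtdef
  have hXt : Xt.PosDef := funH_posDef _ fun i => add_pos (hA.eigenvalues_pos i) ht
  have hYt : Yt.PosDef := funH_posDef _ fun i =>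
    add_pos_of_nonneg_of_pos (hB.eigenvalues_nonneg i) ht
  have hXe : Xt = A + (t : ℂ) • 1 := by
    have h := funH_add hA.1 (fun x => x) (fun _ => t)
    rw [funH_id, funH_const] at h
    exact h.symm
  have hYe : Yt = B + (t : ℂ) • 1 := by
    have h := funH_add hB.1 (fun x => x) (fun _ => t)
    rw [funH_id, funH_const] at h
    exact h.symm
  have hsub : (Xt - Yt).PosSemidef := by
    have : Xt - Yt = A - B := by rw [hXe, hYe]; abel
    rw [this]
    exact hBA
  have hXinv : funH hA.1 (fun x => (x + t)⁻¹) = funH hXt.1 (fun x => x⁻¹) := by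
    refine inv_unique ?_ (funH_inv_left hXt)
    rw [hXtdef, funH_mul, funH_congr hA.1 (g := fun x => (x + t) * (x + t)⁻¹)
      (g' := fun _ => 1)
      (fun i => mul_inv_cancel₀ (add_pos (hA.eigenvalues_pos i) ht).ne'), funH_one]
  have hYinv : funH hB.1 (fun x => (x + t)⁻¹) = funH hYt.1 (fun x => x⁻¹) := by
    refine inv_unique ?_ (funH_inv_left hYt)
    rw [hYtdef, funH_mul, funH_congr hB.1 (g := fun x => (x + t) * (x + t)⁻¹)
      (g' := fun _ => 1)
      (fun i => mul_inv_cancel₀ (add_pos_of_nonneg_of_pos (hB.eigenvalues_nonneg i) ht).ne'),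
      funH_one]
  rw [hXinv, hYinv]
  exact inv_antitone hXt hYt hsub

end LH

namespace LH

open MeasureTheory Set

theorem contOn_aux {p lam : ℝ} (hlam : 0 ≤ lam) :
    ContinuousOn (fun t : ℝ => t ^ (p - 1) * (lam / (lam + t))) (Ioi 0) := by
  refine ContinuousOn.mul ?_ ?_
  · exact fun x hx => (Real.continuousAt_rpow_const x _ (Or.inl (ne_of_gt hx))).continuousWithinAt
  · refine ContinuousOn.div continuousOn_const (continuousOn_const.add continuousOn_id)
      fun x hx => ?_
    have : (0:ℝ) < lam + x := add_pos_of_nonneg_of_pos hlam hx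
    exact this.ne'

theorem nonneg_aux {p lam : ℝ} (hlam : 0 ≤ lam) {t : ℝ} (ht : 0 < t) :
    0 ≤ t ^ (p - 1) * (lam / (lam + t)) := by
  have h1 : (0:ℝ) < lam + t := add_pos_of_nonneg_of_pos hlam ht
  positivity

theorem integrableOn_aux {p lam : ℝ} (hp : 0 < p) (hp1 : p < 1) (hlam : 0 ≤ lam) :
    IntegrableOn (fun t : ℝ => t ^ (p - 1) * (lam / (lam + t))) (Ioi 0) := by
  set f : ℝ → ℝ := fun t => t ^ (p - 1) * (lam / (lam + t)) with hf
  have hIoc : IntegrableOn f (Ioc 0 1) := by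
    have hbase : IntegrableOn (fun t : ℝ => t ^ (p - 1)) (Ioc 0 1) := by
      rw [← intervalIntegrable_iff_integrableOn_Ioc_of_le zero_le_one]
      exact intervalIntegral.intervalIntegrable_rpow' (by linarith)
    refine Integrable.mono' hbase
      (((contOn_aux hlam).mono Ioc_subset_Ioi_self).aestronglyMeasurable measurableSet_Ioc) ?_
    refine (ae_restrict_iff' measurableSet_Ioc).mpr (ae_of_all _ fun t ht => ?_)
    have h1 : (0:ℝ) < lam + t := add_pos_of_nonneg_of_pos hlam ht.1
    rw [Real.norm_eq_abs, abs_of_nonneg (nonneg_aux hlam ht.1)]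
    have h2 : lam / (lam + t) ≤ 1 := div_le_one_of_le₀ (by linarith [ht.1]) h1.le
    have h3 : (0:ℝ) ≤ t ^ (p - 1) := Real.rpow_nonneg ht.1.le _
    calc t ^ (p - 1) * (lam / (lam + t)) ≤ t ^ (p - 1) * 1 :=
          mul_le_mul_of_nonneg_left h2 h3
      _ = t ^ (p - 1) := mul_one _
  have hIoi : IntegrableOn f (Ioi 1) := by
    have hbase : IntegrableOn (fun t : ℝ => lam * t ^ (p - 2)) (Ioi 1) :=
      (integrableOn_Ioi_rpow_of_lt (by linarith) one_pos).const_mul lam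
    refine Integrable.mono' hbase
      (((contOn_aux hlam).mono (fun x (hx : (1:ℝ) < x) => lt_trans one_pos hx)).aestronglyMeasurable
        measurableSet_Ioi) ?_
    refine (ae_restrict_iff' measurableSet_Ioi).mpr (ae_of_all _ fun t ht => ?_)
    have ht1 : (1:ℝ) < t := ht
    have ht0 : (0:ℝ) < t := lt_trans one_pos ht1
    have h1 : (0:ℝ) < lam + t := add_pos_of_nonneg_of_pos hlam ht0
    rw [Real.norm_eq_abs, abs_of_nonneg (nonneg_aux hlam ht0)]
    have h2 : lam / (lam + t) ≤ lam / t :=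
      div_le_div_of_nonneg_left hlam ht0 (by linarith)
    have h3 : (0:ℝ) ≤ t ^ (p - 1) := Real.rpow_nonneg ht0.le _
    calc t ^ (p - 1) * (lam / (lam + t)) ≤ t ^ (p - 1) * (lam / t) :=
          mul_le_mul_of_nonneg_left h2 h3
      _ = lam * (t ^ (p - 1) / t) := by ring
      _ = lam * t ^ (p - 2) := by
          rw [show p - 2 = (p - 1) - 1 by ring, Real.rpow_sub ht0 (p - 1) 1, Real.rpow_one]
  have : Ioc (0:ℝ) 1 ∪ Ioi 1 = Ioi 0 := Ioc_union_Ioi_eq_Ioi zero_le_one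
  rw [← this]
  exact hIoc.union hIoi

end LH

namespace LH

open MeasureTheory Set

theorem integral_aux {p lam : ℝ} (hp : 0 < p) (hp1 : p < 1) (hlam : 0 ≤ lam) :
    ∫ t in Ioi (0:ℝ), t ^ (p - 1) * (lam / (lam + t)) =
      lam ^ p * ∫ t in Ioi (0:ℝ), t ^ (p - 1) * (1 / (1 + t)) := by
  rcases eq_or_lt_of_le hlam with h0 | hpos
  · rw [← h0]
    rw [Real.zero_rpow hp.ne', zero_mul]
    rw [show (fun t : ℝ => t ^ (p - 1) * ((0:ℝ) / (0 + t))) = fun _ => (0:ℝ) by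
      funext t; simp]
    simp
  · set g : ℝ → ℝ := fun s => s ^ (p - 1) * (1 / (1 + s)) with hg
    have key : EqOn (fun t : ℝ => t ^ (p - 1) * (lam / (lam + t)))
        (fun t : ℝ => lam ^ (p - 1) * g (lam⁻¹ * t)) (Ioi 0) := by
      intro t ht
      have ht0 : (0:ℝ) < t := ht
      have hlam0 : lam ≠ 0 := hpos.ne'
      have h1 : (0:ℝ) < lam + t := by positivity
      simp only [hg]
      rw [Real.mul_rpow (inv_nonneg.mpr hlam) ht0.le, Real.inv_rpow hlam]
      have h2 : (1 : ℝ) + lam⁻¹ * t = (lam + t) / lam := by field_simp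
      rw [h2]
      rw [one_div, inv_div]
      field_simp
    rw [setIntegral_congr_fun measurableSet_Ioi key]
    rw [integral_const_mul]
    have h4 : ∫ t in Ioi (0:ℝ), g (lam⁻¹ * t) = lam * ∫ s in Ioi (0:ℝ), g s := by
      have := integral_comp_mul_left_Ioi g 0 (inv_pos.mpr hpos)
      rw [mul_zero] at this
      rw [this, inv_inv, smul_eq_mul]
    rw [h4, ← mul_assoc, ← Real.rpow_add_one hpos.ne' (p - 1)]
    norm_num

theorem C_pos {p : ℝ} (hp : 0 < p) (hp1 : p < 1) :
    0 < ∫ t in Ioi (0:ℝ), t ^ (p - 1) * (1 / (1 + t)) := by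
  have hint : IntegrableOn (fun t : ℝ => t ^ (p - 1) * ((1:ℝ) / (1 + t))) (Ioi 0) := by
    have := integrableOn_aux hp hp1 (zero_le_one (α := ℝ))
    simpa using this
  rw [setIntegral_pos_iff_support_of_nonneg_ae ?_ hint]
  · have hsub : Ioi (0:ℝ) ⊆ Function.support (fun t : ℝ => t ^ (p - 1) * (1 / (1 + t))) ∩
        Ioi 0 := by
      intro t ht
      have ht0 : (0:ℝ) < t := ht
      refine ⟨?_, ht⟩
      have h1 : (0:ℝ) < t ^ (p - 1) * (1 / (1 + t)) := by positivity
      exact h1.ne'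
    calc (0 : ENNReal) < volume (Ioi (0:ℝ)) := by simp
      _ ≤ _ := measure_mono hsub
  · refine (ae_restrict_iff' measurableSet_Ioi).mpr (ae_of_all _ fun t ht => ?_)
    have ht0 : (0:ℝ) < t := ht
    positivity

end LH

namespace LH

open MeasureTheory Set

theorem key_scalar {m k : ℕ} {p : ℝ} (hp : 0 < p) (hp1 : p < 1)
    (α : Fin m → ℝ) (c : Fin m → ℝ) (β : Fin k → ℝ) (d : Fin k → ℝ)
    (hα : ∀ i, 0 < α i) (hβ : ∀ j, 0 ≤ β j) (hc : ∀ i, 0 ≤ c i) (hd : ∀ j, 0 ≤ d j)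
    (hsum : ∑ i, c i = ∑ j, d j)
    (hres : ∀ t : ℝ, 0 < t → ∑ i, c i * (α i + t)⁻¹ ≤ ∑ j, d j * (β j + t)⁻¹) :
    ∑ j, β j ^ p * d j ≤ ∑ i, α i ^ p * c i := by
  set C := ∫ t in Ioi (0:ℝ), t ^ (p - 1) * (1 / (1 + t)) with hC
  have hCpos : 0 < C := C_pos hp hp1
  have hintA : ∀ i : Fin m, IntegrableOn
      (fun t : ℝ => c i * (t ^ (p - 1) * (α i / (α i + t)))) (Ioi 0) :=
    fun i => (integrableOn_aux hp hp1 (hα i).le).const_mul (c i)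
  have hintB : ∀ j : Fin k, IntegrableOn
      (fun t : ℝ => d j * (t ^ (p - 1) * (β j / (β j + t)))) (Ioi 0) :=
    fun j => (integrableOn_aux hp hp1 (hβ j)).const_mul (d j)
  have hFA : IntegrableOn
      (fun t : ℝ => ∑ i, c i * (t ^ (p - 1) * (α i / (α i + t)))) (Ioi 0) :=
    integrable_finset_sum _ (fun i _ => hintA i)
  have hFB : IntegrableOn
      (fun t : ℝ => ∑ j, d j * (t ^ (p - 1) * (β j / (β j + t)))) (Ioi 0) :=
    integrable_finset_sum _ (fun j _ => hintB j)
  have hvalA : ∫ t in Ioi (0:ℝ), (∑ i, c i * (t ^ (p - 1) * (α i / (α i + t)))) =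
      ∑ i, c i * (α i ^ p * C) := by
    rw [integral_finset_sum _ (fun i _ => hintA i)]
    refine Finset.sum_congr rfl fun i _ => ?_
    rw [integral_const_mul, integral_aux hp hp1 (hα i).le]
  have hvalB : ∫ t in Ioi (0:ℝ), (∑ j, d j * (t ^ (p - 1) * (β j / (β j + t)))) =
      ∑ j, d j * (β j ^ p * C) := by
    rw [integral_finset_sum _ (fun j _ => hintB j)]
    refine Finset.sum_congr rfl fun j _ => ?_
    rw [integral_const_mul, integral_aux hp hp1 (hβ j)]
  have hmono : ∀ t ∈ Ioi (0:ℝ),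
      (∑ j, d j * (t ^ (p - 1) * (β j / (β j + t)))) ≤
        ∑ i, c i * (t ^ (p - 1) * (α i / (α i + t))) := by
    intro t ht
    have ht0 : (0:ℝ) < t := ht
    have expand : ∀ (N : ℕ) (lam e : Fin N → ℝ), (∀ j, 0 ≤ lam j) →
        ∑ j, e j * (t ^ (p - 1) * (lam j / (lam j + t))) =
          t ^ (p - 1) * (∑ j, e j) - (t ^ (p - 1) * t) * ∑ j, e j * (lam j + t)⁻¹ := by
      intro N lam e hl
      rw [Finset.mul_sum, Finset.mul_sum, ← Finset.sum_sub_distrib]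
      refine Finset.sum_congr rfl fun j _ => ?_
      have h1 : lam j + t ≠ 0 := (add_pos_of_nonneg_of_pos (hl j) ht0).ne'
      field_simp
      ring
    rw [expand m α c (fun i => (hα i).le), expand k β d hβ, hsum]
    have hT : (0:ℝ) ≤ t ^ (p - 1) * t :=
      mul_nonneg (Real.rpow_nonneg ht0.le _) ht0.le
    have := mul_le_mul_of_nonneg_left (hres t ht0) hT
    linarith
  have hle := setIntegral_mono_on hFB hFA measurableSet_Ioi hmono
  rw [hvalA, hvalB] at hle
  have h2 : (∑ j, β j ^ p * d j) * C ≤ (∑ i, α i ^ p * c i) * C := by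
    calc (∑ j, β j ^ p * d j) * C = ∑ j, d j * (β j ^ p * C) := by
          rw [Finset.sum_mul]; exact Finset.sum_congr rfl fun j _ => by ring
      _ ≤ ∑ i, c i * (α i ^ p * C) := hle
      _ = (∑ i, α i ^ p * c i) * C := by
          rw [Finset.sum_mul]; exact Finset.sum_congr rfl fun i _ => by ring
  exact le_of_mul_le_mul_right h2 hCpos

end LH

namespace LH

theorem sumSq_starU {M : Matrix (Fin n) (Fin n) ℂ} (hM : M.IsHermitian) (x : Fin n → ℂ) :
    ∑ i, ‖((star (hM.eigenvectorUnitary : Matrix (Fin n) (Fin n) ℂ)) *ᵥ x) i‖ ^ 2 =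
      ∑ i, ‖x i‖ ^ 2 := by
  have h1 : star (star (hM.eigenvectorUnitary : Matrix (Fin n) (Fin n) ℂ)) *
      star (hM.eigenvectorUnitary : Matrix (Fin n) (Fin n) ℂ) = 1 := by
    rw [star_star]
    exact Unitary.coe_mul_star_self hM.eigenvectorUnitary
  exact unitary_mulVec_sumSq h1 x

theorem loewner_heinz {A B : Matrix (Fin n) (Fin n) ℂ}
    (hA : A.PosDef) (hB : B.PosSemidef) (hBA : (A - B).PosSemidef)
    {p : ℝ} (hp : 0 < p) (hp1 : p < 1) :
    (rpowH hA.1 p - rpowH hB.1 p).PosSemidef := by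
  refine Matrix.PosSemidef.of_dotProduct_mulVec_nonneg ((rpowH_isHermitian hA.1 p).sub (rpowH_isHermitian hB.1 p)) fun x => ?_
  rw [Matrix.sub_mulVec, dotProduct_sub, rpowH_eq_funH, rpowH_eq_funH,
    quadForm, quadForm, ← Complex.ofReal_sub, Complex.zero_le_real, sub_nonneg]
  set cA : Fin n → ℝ := fun i =>
    ‖((star (hA.1.eigenvectorUnitary : Matrix (Fin n) (Fin n) ℂ)) *ᵥ x) i‖ ^ 2 with hcA
  set cB : Fin n → ℝ := fun j =>
    ‖((star (hB.1.eigenvectorUnitary : Matrix (Fin n) (Fin n) ℂ)) *ᵥ x) j‖ ^ 2 with hcB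
  have hsum : ∑ i, cA i = ∑ j, cB j := by
    rw [hcA, hcB, sumSq_starU hA.1 x, sumSq_starU hB.1 x]
  have hres : ∀ t : ℝ, 0 < t →
      ∑ i, cA i * (hA.1.eigenvalues i + t)⁻¹ ≤ ∑ j, cB j * (hB.1.eigenvalues j + t)⁻¹ := by
    intro t ht
    have h := (resolvent_psd hA hB hBA ht).dotProduct_mulVec_nonneg x
    rw [Matrix.sub_mulVec, dotProduct_sub, quadForm, quadForm,
      ← Complex.ofReal_sub, Complex.zero_le_real, sub_nonneg] at h
    calc ∑ i, cA i * (hA.1.eigenvalues i + t)⁻¹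
        = ∑ i, (hA.1.eigenvalues i + t)⁻¹ * cA i :=
          Finset.sum_congr rfl fun i _ => mul_comm _ _
      _ ≤ ∑ j, (hB.1.eigenvalues j + t)⁻¹ * cB j := h
      _ = ∑ j, cB j * (hB.1.eigenvalues j + t)⁻¹ :=
          Finset.sum_congr rfl fun j _ => mul_comm _ _
  exact key_scalar hp hp1 hA.1.eigenvalues cA hB.1.eigenvalues cB
    hA.eigenvalues_pos hB.eigenvalues_nonneg (fun i => sq_nonneg _) (fun j => sq_nonneg _)
    hsum hres

theorem sumSq_mulVec_le {M : Matrix (Fin n) (Fin n) ℂ} (hM : M.PosSemidef)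
    (h1 : ((1 : Matrix (Fin n) (Fin n) ℂ) - M).PosSemidef) (w : Fin n → ℂ) :
    ∑ i, ‖(M *ᵥ w) i‖ ^ 2 ≤ ∑ i, ‖w i‖ ^ 2 := by
  set U : Matrix (Fin n) (Fin n) ℂ := (hM.1.eigenvectorUnitary : Matrix (Fin n) (Fin n) ℂ)
    with hU
  set y : Fin n → ℂ := star U *ᵥ w with hy
  have hUU : star U * U = 1 := Unitary.coe_star_mul_self hM.1.eigenvectorUnitary
  have hMw : M *ᵥ w =
      U *ᵥ ((Matrix.diagonal (fun i => ((hM.1.eigenvalues i : ℝ) : ℂ))) *ᵥ y) := by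
    conv_lhs => rw [← funH_id hM.1]
    unfold funH
    rw [Matrix.mulVec_mulVec, Matrix.mulVec_mulVec]
  have heig : ∀ i, 0 ≤ hM.1.eigenvalues i := hM.eigenvalues_nonneg
  have heig1 : ∀ i, hM.1.eigenvalues i ≤ 1 := eig_le_one hM.1 h1
  calc ∑ i, ‖(M *ᵥ w) i‖ ^ 2
      = ∑ i, ‖((Matrix.diagonal (fun i => ((hM.1.eigenvalues i : ℝ) : ℂ))) *ᵥ y) i‖ ^ 2 := by
        rw [hMw]; exact unitary_mulVec_sumSq hUU _
    _ ≤ ∑ i, ‖y i‖ ^ 2 := by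
        refine Finset.sum_le_sum fun i _ => ?_
        rw [Matrix.mulVec_diagonal, norm_mul, mul_pow]
        have hn : ‖((hM.1.eigenvalues i : ℝ) : ℂ)‖ = hM.1.eigenvalues i := by
          rw [Complex.norm_real, Real.norm_eq_abs, abs_of_nonneg (heig i)]
        rw [hn]
        have : hM.1.eigenvalues i ^ 2 ≤ 1 := by nlinarith [heig i, heig1 i]
        nlinarith [sq_nonneg (‖y i‖), this, sq_nonneg (hM.1.eigenvalues i)]
    _ = ∑ i, ‖w i‖ ^ 2 := sumSq_starU hM.1 w

end LH

namespace LH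

theorem opN_le_one {M : Matrix (Fin n) (Fin n) ℂ} (hM : M.PosSemidef)
    (h1 : ((1 : Matrix (Fin n) (Fin n) ℂ) - M).PosSemidef) : opN M ≤ 1 := by
  unfold opN
  refine ContinuousLinearMap.opNorm_le_bound _ zero_le_one fun x => ?_
  rw [one_mul]
  rw [EuclideanSpace.norm_eq, EuclideanSpace.norm_eq]
  apply Real.sqrt_le_sqrt
  have hc : ∀ i, (Matrix.toEuclideanCLM (𝕜 := ℂ) M x) i = (M *ᵥ (fun j => x j)) i :=
    fun i => rfl
  calc ∑ i, ‖(Matrix.toEuclideanCLM (𝕜 := ℂ) M x) i‖ ^ 2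
      = ∑ i, ‖(M *ᵥ (fun j => x j)) i‖ ^ 2 :=
        Finset.sum_congr rfl fun i _ => by rw [hc i]
    _ ≤ ∑ i, ‖x i‖ ^ 2 := sumSq_mulVec_le hM h1 _

theorem conj_one_aux {A B : Matrix (Fin n) (Fin n) ℂ}
    (hA : A.PosDef) (hB : B.PosSemidef) (hBA : (A - B).PosSemidef) :
    opN (rpowH hA.1 (-(1 : ℝ) / 2) * B * rpowH hA.1 (-(1 : ℝ) / 2)) ≤ 1 := by
  set E : Matrix (Fin n) (Fin n) ℂ := rpowH hA.1 (-(1 : ℝ) / 2) with hE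
  have hEh : E.IsHermitian := rpowH_isHermitian _ _
  have hMpsd : (E * B * E).PosSemidef := by
    have h := hB.mul_mul_conjTranspose_same E
    rwa [hEh.eq] at h
  have hEAE : E * A * E = 1 := by
    rw [hE, rpowH_eq_funH]
    have h1 := funH_mul hA.1 (fun x => x ^ (-(1:ℝ) / 2)) (fun x => x)
    rw [funH_id] at h1
    rw [h1, funH_mul, funH_congr hA.1
      (g := fun x => x ^ (-(1:ℝ) / 2) * x * x ^ (-(1:ℝ) / 2)) (g' := fun _ => 1)
      (fun i => ?_), funH_one]
    have hpos := hA.eigenvalues_pos i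
    set lam := hA.1.eigenvalues i
    show lam ^ (-(1:ℝ) / 2) * lam * lam ^ (-(1:ℝ) / 2) = 1
    rw [← Real.rpow_add_one hpos.ne' (-(1:ℝ) / 2), ← Real.rpow_add hpos]
    norm_num
  have h1M : ((1 : Matrix (Fin n) (Fin n) ℂ) - E * B * E).PosSemidef := by
    have hid : (1 : Matrix (Fin n) (Fin n) ℂ) - E * B * E = E * (A - B) * Eᴴ := by
      rw [hEh.eq, Matrix.mul_sub, Matrix.sub_mul, hEAE]
    rw [hid]
    exact hBA.mul_mul_conjTranspose_same E
  exact opN_le_one hMpsd h1M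

theorem opN_nonneg (M : Matrix (Fin n) (Fin n) ℂ) : 0 ≤ opN M := norm_nonneg _

end LH


theorem stmt_17 {n : ℕ} (A B : Matrix (Fin n) (Fin n) ℂ)
    (hA : A.PosDef) (hB : B.PosSemidef) (hBA : (A - B).PosSemidef) :
    opN (rpowH hA.1 (-(1 : ℝ) / 2) * B * rpowH hA.1 (-(1 : ℝ) / 2)) ≤ 1 ∧
    ((ConvexOn ℝ Set.univ fun t : ℝ => Real.log
        (opN (rpowH hA.1 (-t / 2) * rpowH hB.1 t * rpowH hA.1 (-t / 2)))) →
      opN (rpowH hA.1 (-(0 : ℝ) / 2) * rpowH hB.1 0 * rpowH hA.1 (-(0 : ℝ) / 2)) = 1 →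
      opN (rpowH hA.1 (-(1 : ℝ) / 2) * rpowH hB.1 1 * rpowH hA.1 (-(1 : ℝ) / 2)) ≤ 1 →
      ∀ p ∈ Set.Ioo (0 : ℝ) 1,
        opN (rpowH hA.1 (-p / 2) * rpowH hB.1 p * rpowH hA.1 (-p / 2)) ≤ 1) ∧
    (∀ p ∈ Set.Ioo (0 : ℝ) 1, (rpowH hA.1 p - rpowH hB.1 p).PosSemidef) := by
  refine ⟨LH.conj_one_aux hA hB hBA, ?_, fun p hp => LH.loewner_heinz hA hB hBA hp.1 hp.2⟩
  intro hconv h0 h1 p hp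
  have key := hconv.2 (Set.mem_univ (0:ℝ)) (Set.mem_univ (1:ℝ))
    (sub_nonneg.mpr hp.2.le) hp.1.le (by ring)
  simp only [smul_eq_mul, mul_zero, mul_one, zero_add] at key
  rw [h0, Real.log_one, mul_zero, zero_add] at key
  have hf1 : Real.log (opN (rpowH hA.1 (-(1:ℝ)/2) * rpowH hB.1 1 * rpowH hA.1 (-(1:ℝ)/2)))
      ≤ 0 := Real.log_nonpos (norm_nonneg _) h1
  have hlogp : Real.log (opN (rpowH hA.1 (-p/2) * rpowH hB.1 p * rpowH hA.1 (-p/2))) ≤ 0 := by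
    have hple : p * Real.log (opN (rpowH hA.1 (-(1:ℝ)/2) * rpowH hB.1 1 *
        rpowH hA.1 (-(1:ℝ)/2))) ≤ 0 :=
      mul_nonpos_of_nonneg_of_nonpos hp.1.le hf1
    linarith
  by_contra hgt
  push_neg at hgt
  have := Real.log_pos hgt
  linarith
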